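/- Let a be an integer and let v1 = (a+1,-a,-a,a,a), v2 = (a,-a-1,-a,a,-a), v3 = (-a,a,-a,-a-1,-a), v4 = (a+1,-a,-a+1,-a-1,-a), v5 = (a-1,a+1,a+1,-a+1,-a-1) be the rows of a 5×5 integer matrix M. Then det(M) = ±(16a^5 + 16a^4 + 32a^3 + 16a^2 + 5a + 1). -/

import Mathlib

set_option maxHeartbeats 1000000

theorem lattice_det_class0 (a : ℤ) :
    let M : Matrix (Fin 5) (Fin 5) ℤ := Matrix.of
      ![![a + 1, -a, -a, a, a],
        ![a, -a - 1, -a, a, -a],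
        ![-a, a, -a, -a - 1, -a],
        ![a + 1, -a, -a + 1, -a - 1, -a],
        ![a - 1, a + 1, a + 1, -a + 1, -a - 1]]
    M.det = 16 * a ^ 5 + 16 * a ^ 4 + 32 * a ^ 3 + 16 * a ^ 2 + 5 * a + 1 ∨
    M.det = -(16 * a ^ 5 + 16 * a ^ 4 + 32 * a ^ 3 + 16 * a ^ 2 + 5 * a + 1) := by
  intro M
  left
  simp [M, Matrix.det_succ_row_zero, Fin.sum_univ_succ, Fin.succAbove,
    Matrix.submatrix_apply, Fin.castSucc, Fin.castAdd, Fin.castLE, Fin.succ,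
    show ((3:Fin 4):ℕ) = 3 from rfl, show ((2:Fin 4):ℕ) = 2 from rfl,
    show ((1:Fin 4):ℕ) = 1 from rfl, show ((3:Fin 5):ℕ) = 3 from rfl,
    show ((2:Fin 5):ℕ) = 2 from rfl]
  ring
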